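/- Let E be a real inner product space and f : E → ℝ a convex function. Suppose u minimizes x ↦ f(x) + (1/2)‖x − y‖² over E and u' minimizes x ↦ f(x) + (1/2)‖x − y'‖² over E (i.e., u = Prox_f(y) and u' = Prox_f(y')). Then ‖u − u'‖² ≤ ⟨u − u', y − y'⟩; that is, the proximity operator Prox_f is firmly non-expansive. -/

import Mathlib

open scoped RealInnerProductSpace

private lemma prox_var_ineq {E : Type*} [NormedAddCommGroup E] [InnerProductSpace ℝ E]
    (f : E → ℝ) (hf : ConvexOn ℝ Set.univ f) (y u v : E)
    (hu : ∀ x, f u + (1 / 2) * ‖u - y‖ ^ 2 ≤ f x + (1 / 2) * ‖x - y‖ ^ 2) :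
    f u - f v ≤ ⟪u - y, v - u⟫ := by
  apply le_of_forall_pos_le_add
  intro ε hε
  set C : ℝ := (1/2) * ‖v - u‖ ^ 2 with hC
  have hC0 : 0 ≤ C := by positivity
  set t : ℝ := min 1 (ε / (C + 1)) with ht
  have ht0 : 0 < t := lt_min one_pos (by positivity)
  have ht1 : t ≤ 1 := min_le_left _ _
  have htC : t * C ≤ ε := by
    have h1 : t ≤ ε / (C + 1) := min_le_right _ _
    have : t * (C + 1) ≤ ε := by
      rw [← le_div_iff₀ (by positivity)]; exact h1
    nlinarith
  -- convexity at x_t = (1-t)•u + t•v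
  have hconv := hf.2 (Set.mem_univ u) (Set.mem_univ v)
    (show (0:ℝ) ≤ 1 - t by linarith) (le_of_lt ht0) (by ring)
  have hmin := hu ((1 - t) • u + t • v)
  have hexp : (1 - t) • u + t • v - y = (u - y) + t • (v - u) := by
    module
  have hnorm : ‖(1 - t) • u + t • v - y‖ ^ 2
      = ‖u - y‖ ^ 2 + 2 * (t * ⟪u - y, v - u⟫) + t ^ 2 * ‖v - u‖ ^ 2 := by
    rw [hexp, norm_add_sq_real, real_inner_smul_right, norm_smul]
    simp [mul_pow, abs_of_pos ht0]
  rw [hnorm] at hmin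
  have key : t * (f u - f v) ≤ t * ⟪u - y, v - u⟫ + (1/2) * t ^ 2 * ‖v - u‖ ^ 2 := by
    simp only [smul_eq_mul] at hconv
    nlinarith [hmin, hconv]
  have : f u - f v ≤ ⟪u - y, v - u⟫ + (1/2) * t * ‖v - u‖ ^ 2 := by
    have := mul_le_mul_of_nonneg_left key (le_of_lt (inv_pos.mpr ht0))
    rw [mul_comm] at this
    calc f u - f v = t * (f u - f v) * t⁻¹ := by field_simp
      _ ≤ (t * ⟪u - y, v - u⟫ + (1/2) * t ^ 2 * ‖v - u‖ ^ 2) * t⁻¹ := by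
          exact mul_le_mul_of_nonneg_right key (le_of_lt (inv_pos.mpr ht0))
      _ = ⟪u - y, v - u⟫ + (1/2) * t * ‖v - u‖ ^ 2 := by field_simp
  calc f u - f v ≤ ⟪u - y, v - u⟫ + (1/2) * t * ‖v - u‖ ^ 2 := this
    _ = ⟪u - y, v - u⟫ + t * C := by rw [hC]; ring
    _ ≤ ⟪u - y, v - u⟫ + ε := by linarith

theorem stmt3 {E : Type*} [NormedAddCommGroup E] [InnerProductSpace ℝ E]
    (f : E → ℝ) (hf : ConvexOn ℝ Set.univ f)
    (y y' u u' : E)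
    (hu : ∀ x, f u + (1 / 2) * ‖u - y‖ ^ 2 ≤ f x + (1 / 2) * ‖x - y‖ ^ 2)
    (hu' : ∀ x, f u' + (1 / 2) * ‖u' - y'‖ ^ 2 ≤ f x + (1 / 2) * ‖x - y'‖ ^ 2) :
    ‖u - u'‖ ^ 2 ≤ ⟪u - u', y - y'⟫ := by
  have h1 := prox_var_ineq f hf y u u' hu
  have h2 := prox_var_ineq f hf y' u' u hu'
  have hsum : 0 ≤ ⟪u - y, u' - u⟫ + ⟪u' - y', u - u'⟫ := by linarith
  have hexp : ⟪u - y, u' - u⟫ + ⟪u' - y', u - u'⟫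
      = ⟪u - u', y - y'⟫ - ‖u - u'‖ ^ 2 := by
    rw [← real_inner_self_eq_norm_sq]
    simp only [inner_sub_left, inner_sub_right]
    linarith [real_inner_comm u u', real_inner_comm y u, real_inner_comm y' u',
      real_inner_comm y u', real_inner_comm y' u]
  linarith [hexp ▸ hsum]
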